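/- Let (x_n) be a solution of x_{n+1} = (x_n·x_{n-1} + x_{n-1} + 1)/(x_n·x_{n-1}) with positive initial values x_{-1}, x_0 > 0. Then x_n → α as n → ∞, where α is the real root of λ³ - λ² - λ - 1 = 0. -/

import Mathlib

/- The sequence is shifted: `x 0` plays the role of `x₋₁`, `x 1` of `x₀`. -/
theorem stmt15 (α : ℝ) (hα : α ^ 3 - α ^ 2 - α - 1 = 0)
    (x : ℕ → ℝ) (hx0 : 0 < x 0) (hx1 : 0 < x 1)
    (hxrec : ∀ n, x (n + 2) = (x (n + 1) * x n + x n + 1) / (x (n + 1) * x n)) :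
    Filter.Tendsto x Filter.atTop (nhds α) := by
  have hα1 : (9:ℝ)/5 < α := by nlinarith [sq_nonneg (α + 2/5), sq_nonneg α]
  have hα0 : (0:ℝ) < α := by linarith
  have hαne : α ≠ 0 := ne_of_gt hα0
  -- positivity
  have hpos : ∀ n, 0 < x n := by
    have h : ∀ n, 0 < x n ∧ 0 < x (n+1) := by
      intro n
      induction n with
      | zero => exact ⟨hx0, hx1⟩
      | succ k ih =>
        refine ⟨ih.2, ?_⟩
        rw [hxrec]
        have h1 := ih.1; have h2 := ih.2
        exact div_pos (by nlinarith) (mul_pos h2 h1)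
    exact fun n => (h n).1
  -- x (n+2) > 1
  have hgt1 : ∀ n, 1 < x (n+2) := by
    intro n
    rw [hxrec, lt_div_iff₀ (mul_pos (hpos (n+1)) (hpos n))]
    nlinarith [hpos n, hpos (n+1)]
  -- x (n+4) < 3
  have hlt3 : ∀ n, x (n+4) < 3 := by
    intro n
    have h := hxrec (n+2)
    rw [show n+2+2 = n+4 by ring, show n+2+1 = n+3 by ring] at h
    rw [h, div_lt_iff₀ (mul_pos (hpos (n+3)) (hpos (n+2)))]
    nlinarith [hgt1 n, hgt1 (n+1), hpos (n+2), hpos (n+3)]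
  -- x (n+6) ≥ 13/9
  have hge : ∀ n, (13:ℝ)/9 ≤ x (n+6) := by
    intro n
    have h := hxrec (n+4)
    rw [show n+4+2 = n+6 by ring, show n+4+1 = n+5 by ring] at h
    rw [h, le_div_iff₀ (mul_pos (hpos (n+5)) (hpos (n+4)))]
    nlinarith [hlt3 n, hlt3 (n+1), hgt1 (n+2), hgt1 (n+3), hpos (n+4), hpos (n+5)]
  set q : ℝ := 110/169 + 25/117 with hqdef
  have hq0 : (0:ℝ) ≤ q := by norm_num [hqdef]
  have hq1 : q < 1 := by norm_num [hqdef]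
  -- key contraction
  have key : ∀ n, |x (n+8) - α| ≤ q * max (|x (n+6) - α|) (|x (n+7) - α|) := by
    intro n
    have ha : (13:ℝ)/9 ≤ x (n+6) := hge n
    have hb : (13:ℝ)/9 ≤ x (n+7) := hge (n+1)
    set a := x (n+6) with hadef
    set b := x (n+7) with hbdef
    have ha0 : (0:ℝ) < a := by linarith
    have hb0 : (0:ℝ) < b := by linarith
    have hane : a ≠ 0 := ne_of_gt ha0
    have hbne : b ≠ 0 := ne_of_gt hb0
    have hx8 : x (n+8) = 1 + 1/b + 1/(b*a) := by
      have h := hxrec (n+6)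
      rw [show n+6+2 = n+8 by ring, show n+6+1 = n+7 by ring] at h
      rw [h, ← hadef, ← hbdef]
      field_simp
    have hαe : α = 1 + 1/α + 1/α^2 := by
      field_simp
      linear_combination hα
    have hpure : (1 + 1/b + 1/(b*a)) - (1 + 1/α + 1/α^2)
        = (α - b) * (1/(b*α) + 1/(b*a*α)) + (α - a) * (1/(a*α^2)) := by
      field_simp
      ring
    have hdiff : x (n+8) - α
        = (α - b) * (1/(b*α) + 1/(b*a*α)) + (α - a) * (1/(a*α^2)) := by
      rw [hx8]
      nth_rewrite 1 [hαe]
      exact hpure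
    have hc1 : 1/(b*α) + 1/(b*a*α) ≤ 110/169 := by
      have h1 : 1/(b*α) ≤ 5/13 := by
        rw [div_le_div_iff₀ (mul_pos hb0 hα0) (by norm_num)]
        nlinarith
      have h2 : 1/(b*a*α) ≤ 45/169 := by
        rw [div_le_div_iff₀ (mul_pos (mul_pos hb0 ha0) hα0) (by norm_num)]
        nlinarith [mul_le_mul hb ha (by norm_num : (0:ℝ) ≤ 13/9) (by linarith)]
      linarith
    have hc2 : 1/(a*α^2) ≤ 25/117 := by
      rw [div_le_div_iff₀ (mul_pos ha0 (by positivity)) (by norm_num)]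
      nlinarith [sq_nonneg (α - 9/5)]
    have hc1p : (0:ℝ) ≤ 1/(b*α) + 1/(b*a*α) := by positivity
    have hc2p : (0:ℝ) ≤ 1/(a*α^2) := by positivity
    have hA : |α - a| ≤ max (|a - α|) (|b - α|) := by
      rw [abs_sub_comm]; exact le_max_left _ _
    have hB : |α - b| ≤ max (|a - α|) (|b - α|) := by
      rw [abs_sub_comm]; exact le_max_right _ _
    have hM : (0:ℝ) ≤ max (|a - α|) (|b - α|) :=
      le_trans (abs_nonneg _) (le_max_left _ _)
    calc |x (n+8) - α|
        = |(α - b) * (1/(b*α) + 1/(b*a*α)) + (α - a) * (1/(a*α^2))| := by rw [hdiff]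
      _ ≤ |(α - b) * (1/(b*α) + 1/(b*a*α))| + |(α - a) * (1/(a*α^2))| := abs_add_le _ _
      _ = |α - b| * (1/(b*α) + 1/(b*a*α)) + |α - a| * (1/(a*α^2)) := by
          rw [abs_mul, abs_mul, abs_of_nonneg hc1p, abs_of_nonneg hc2p]
      _ ≤ max (|a - α|) (|b - α|) * (110/169) + max (|a - α|) (|b - α|) * (25/117) := by
          gcongr
      _ = q * max (|a - α|) (|b - α|) := by rw [hqdef]; ring
  -- maxima along pairs
  set m : ℕ → ℝ := fun n => max (|x (2*n+6) - α|) (|x (2*n+7) - α|) with hmdef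
  have hm0 : ∀ n, 0 ≤ m n := fun n => le_trans (abs_nonneg _) (le_max_left _ _)
  have hstep : ∀ n, m (n+1) ≤ q * m n := by
    intro n
    have h1 : |x (2*n+8) - α| ≤ q * m n := key (2*n)
    have h2 : |x (2*n+9) - α| ≤ q * m n := by
      have h := key (2*n+1)
      rw [show 2*n+1+8 = 2*n+9 by ring, show 2*n+1+6 = 2*n+7 by ring,
        show 2*n+1+7 = 2*n+8 by ring] at h
      refine le_trans h ?_
      have hmax : max (|x (2*n+7) - α|) (|x (2*n+8) - α|) ≤ m n := by
        refine max_le ?_ ?_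
        · simp only [hmdef]
          exact le_max_right _ _
        · calc |x (2*n+8) - α| ≤ q * m n := h1
            _ ≤ 1 * m n := mul_le_mul_of_nonneg_right (le_of_lt hq1) (hm0 n)
            _ = m n := one_mul _
      exact mul_le_mul_of_nonneg_left hmax hq0
    have hmm : m (n+1) = max (|x (2*n+8) - α|) (|x (2*n+9) - α|) := by
      simp only [hmdef]
      rw [show 2*(n+1)+6 = 2*n+8 by ring, show 2*(n+1)+7 = 2*n+9 by ring]
    rw [hmm]
    exact max_le h1 h2
  have hgeo : ∀ n, m n ≤ m 0 * q ^ n := by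
    intro n
    induction n with
    | zero => simp
    | succ k ih =>
      calc m (k+1) ≤ q * m k := hstep k
        _ ≤ q * (m 0 * q ^ k) := by gcongr
        _ = m 0 * q ^ (k+1) := by ring
  have hek : ∀ k, |x (k+6) - α| ≤ m (k/2) := by
    intro k
    rcases Nat.even_or_odd k with ⟨j, hj⟩ | ⟨j, hj⟩
    · have h1 : k / 2 = j := by omega
      have h2 : k + 6 = 2*j + 6 := by omega
      rw [h1, h2, hmdef]
      exact le_max_left _ _
    · have h1 : k / 2 = j := by omega
      have h2 : k + 6 = 2*j + 7 := by omega
      rw [h1, h2, hmdef]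
      exact le_max_right _ _
  have hebound : ∀ k, |x (k+6) - α| ≤ m 0 * q ^ (k/2) :=
    fun k => le_trans (hek k) (hgeo (k/2))
  have hdiv : Filter.Tendsto (fun k : ℕ => k / 2) Filter.atTop Filter.atTop := by
    apply Filter.tendsto_atTop_atTop.mpr
    intro b
    exact ⟨2*b, fun c hc => by omega⟩
  have hpow : Filter.Tendsto (fun k : ℕ => m 0 * q ^ (k/2)) Filter.atTop (nhds 0) := by
    have h1 : Filter.Tendsto (fun k : ℕ => q ^ k) Filter.atTop (nhds 0) :=
      tendsto_pow_atTop_nhds_zero_of_lt_one hq0 hq1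
    have h2 := h1.comp hdiv
    have h3 := h2.const_mul (m 0)
    simpa using h3
  have heto : Filter.Tendsto (fun k => |x (k+6) - α|) Filter.atTop (nhds 0) :=
    squeeze_zero (fun k => abs_nonneg _) hebound hpow
  have hx6 : Filter.Tendsto (fun k => x (k+6)) Filter.atTop (nhds α) := by
    rw [tendsto_iff_dist_tendsto_zero]
    simpa only [Real.dist_eq] using heto
  exact (Filter.tendsto_add_atTop_iff_nat 6).mp hx6
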